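/- With ζ(t) = γ_s H(Ỹ(t) − X(t)) − (Z(X_t) − Z(Ỹ_t)) for t ∈ [0,s] and ζ = 0 on (s,T], where γ_s = |R(0)|^{1−ε}/((s−r)(1−ε)), and under the bounds |R(t)|² ≤ (max(|R(0)|^{1−ε} − γ_s(1−ε)t, 0))^{2/(1−ε)}, |Z(X_t) − Z(Ỹ_t)| ≤ L‖R_t‖, and ‖R_t‖ ≤ ‖R_0‖ for the segment sup-norms (by monotonicity of |R(·)| on [0,∞) and R_0 = x − y), it holds that (1/2)∫₀^T |ζ(u)|² du ≤ |R(0)|²/((1−ε²)(s−r)) + L² s ‖R_0‖². -/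

import Mathlib

open MeasureTheory

/-- The Girsanov drift estimate (2.4): with `ζ` bounded on `[0,s]` by
`γ_s ‖R t‖^ε + L ‖R_t‖` (where `‖R_t‖` is the segment sup-norm `N t`), `ζ = 0` on `(s,T]`,
`γ_s = ‖R 0‖^{1−ε}/((s−r)(1−ε))`, the pathwise decay bound on `‖R‖²` and segment-norm
monotonicity, one gets `(1/2)∫₀^T ‖ζ‖² ≤ ‖R 0‖²/((1−ε²)(s−r)) + L² s ‖R_0‖²`. -/
theorem girsanov_drift_estimate {d : ℕ} (r T s ε L γs : ℝ)
    (hr : 0 < r) (hT : r < T) (hs : s ∈ Set.Ioc r T) (hε0 : 0 < ε) (hε1 : ε < 1)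
    (hL : 0 < L)
    (R : ℝ → EuclideanSpace ℝ (Fin d)) (hR_cont : Continuous R)
    (N : ℝ → ℝ) (hN : ∀ t, N t = sSup ((fun u => ‖R (t + u)‖) '' Set.Icc (-r) 0))
    (hγs : γs = ‖R 0‖ ^ (1 - ε) / ((s - r) * (1 - ε)))
    (ζ : ℝ → EuclideanSpace ℝ (Fin d)) (hζ_cont : Continuous ζ)
    (hζ_bdd : ∀ t ∈ Set.Icc (0:ℝ) s, ‖ζ t‖ ≤ γs * ‖R t‖ ^ ε + L * N t)
    (hζ_zero : ∀ t ∈ Set.Ioc s T, ζ t = 0)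
    (hR_decay : ∀ t, 0 ≤ t →
      ‖R t‖ ^ 2 ≤ (max (‖R 0‖ ^ (1 - ε) - γs * (1 - ε) * t) 0) ^ (2 / (1 - ε)))
    (hN_mono : ∀ t, 0 ≤ t → N t ≤ N 0) :
    (1 / 2) * ∫ u in (0:ℝ)..T, ‖ζ u‖ ^ 2 ≤
      ‖R 0‖ ^ 2 / ((1 - ε ^ 2) * (s - r)) + L ^ 2 * s * N 0 ^ 2 := by
  obtain ⟨hrs, hsT⟩ := hs
  have hε' : 0 < 1 - ε := by linarith
  have hc : 0 < s - r := by linarith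
  have hs0 : (0:ℝ) ≤ s := by linarith
  have hq : 0 < 2 * ε / (1 - ε) := by positivity
  set q : ℝ := 2 * ε / (1 - ε) with hqdef
  set a : ℝ := ‖R 0‖ ^ (1 - ε) with hadef
  have ha : 0 ≤ a := Real.rpow_nonneg (norm_nonneg _) _
  have hγ0 : 0 ≤ γs := by rw [hγs]; positivity
  set M : ℝ → ℝ := fun u => max (a - γs * (1 - ε) * u) 0 with hMdef
  have hM0 : ∀ u, 0 ≤ M u := fun u => le_max_right _ 0
  -- N nonneg
  have hNnn : ∀ t, 0 ≤ N t := by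
    intro t
    rw [hN t]
    apply Real.sSup_nonneg
    rintro x ⟨u, -, rfl⟩; exact norm_nonneg _
  -- pointwise bound
  have hRM : ∀ u ∈ Set.Icc (0:ℝ) s, ‖R u‖ ^ (2 * ε) ≤ M u ^ q := by
    intro u hu
    have h2 := hR_decay u hu.1
    have e1 : ‖R u‖ ^ (2 * ε) = (‖R u‖ ^ (2:ℕ)) ^ ε := by
      rw [← Real.rpow_natCast (‖R u‖) 2, ← Real.rpow_mul (norm_nonneg _)]
      norm_num
    have e2 : (M u ^ (2 / (1 - ε))) ^ ε = M u ^ q := by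
      rw [← Real.rpow_mul (hM0 u), hqdef]
      congr 1
      field_simp
    rw [e1, ← e2]
    exact Real.rpow_le_rpow (by positivity) h2 hε0.le
  have hpt : ∀ u ∈ Set.Icc (0:ℝ) s,
      ‖ζ u‖ ^ 2 ≤ 2 * (γs ^ 2 * M u ^ q) + 2 * (L ^ 2 * N 0 ^ 2) := by
    intro u hu
    have hb := hζ_bdd u hu
    have h1 : ‖ζ u‖ ^ 2 ≤ (γs * ‖R u‖ ^ ε + L * N u) ^ 2 :=
      pow_le_pow_left₀ (norm_nonneg _) hb 2
    have h2 : (γs * ‖R u‖ ^ ε) ^ 2 = γs ^ 2 * ‖R u‖ ^ (2 * ε) := by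
      have : (‖R u‖ ^ ε) ^ (2:ℕ) = ‖R u‖ ^ (2 * ε) := by
        rw [← Real.rpow_natCast (‖R u‖ ^ ε) 2, ← Real.rpow_mul (norm_nonneg _)]
        norm_num
        ring_nf
      rw [mul_pow, this]
    have h3 := hRM u hu
    have h4 := hN_mono u hu.1
    have h5 := hNnn u
    nlinarith [sq_nonneg (γs * ‖R u‖ ^ ε - L * N u), sq_nonneg L, mul_pos hL hL,
      mul_nonneg (mul_nonneg (sq_nonneg L) (hNnn 0)) h5,
      mul_le_mul_of_nonneg_left h4 (mul_nonneg (sq_nonneg L) h5),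
      mul_le_mul_of_nonneg_left h4 (mul_nonneg (sq_nonneg L) (hNnn 0))]
  -- integrability
  have hζint : ∀ x y : ℝ, IntervalIntegrable (fun u => ‖ζ u‖ ^ 2) volume x y :=
    fun x y => ((hζ_cont.norm.pow 2)).intervalIntegrable x y
  have hMcont : Continuous M := by
    apply Continuous.max _ continuous_const
    exact continuous_const.sub ((continuous_const.mul continuous_id))
  have hMq_cont : Continuous (fun u => M u ^ q) :=
    hMcont.rpow_const (fun x => Or.inr hq.le)
  -- zero part
  have hzero : ∫ u in s..T, ‖ζ u‖ ^ 2 = 0 := by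
    rw [intervalIntegral.integral_of_le hsT]
    have : ∀ᵐ u ∂(volume.restrict (Set.Ioc s T)), ‖ζ u‖ ^ 2 = (0:ℝ) := by
      filter_upwards [ae_restrict_mem measurableSet_Ioc] with u hu
      simp [hζ_zero u hu]
    rw [MeasureTheory.integral_congr_ae this, integral_zero]
  have hsplit : ∫ u in (0:ℝ)..T, ‖ζ u‖ ^ 2 = ∫ u in (0:ℝ)..s, ‖ζ u‖ ^ 2 := by
    rw [← intervalIntegral.integral_add_adjacent_intervals (hζint 0 s) (hζint s T), hzero,
      add_zero]
  -- comparison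
  have hcomp : ∫ u in (0:ℝ)..s, ‖ζ u‖ ^ 2 ≤
      ∫ u in (0:ℝ)..s, (2 * (γs ^ 2 * M u ^ q) + 2 * (L ^ 2 * N 0 ^ 2)) := by
    apply intervalIntegral.integral_mono_on hs0 (hζint 0 s)
    · exact ((continuous_const.mul (continuous_const.mul hMq_cont)).add
        continuous_const).intervalIntegrable 0 s
    · exact hpt
  have hrhs : ∫ u in (0:ℝ)..s, (2 * (γs ^ 2 * M u ^ q) + 2 * (L ^ 2 * N 0 ^ 2))
      = 2 * (γs ^ 2 * ∫ u in (0:ℝ)..s, M u ^ q) + 2 * (L ^ 2 * N 0 ^ 2) * s := by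
    rw [intervalIntegral.integral_add (f := fun u => 2 * (γs ^ 2 * M u ^ q))
        (g := fun _ => 2 * (L ^ 2 * N 0 ^ 2))
        ((continuous_const.mul (continuous_const.mul hMq_cont)).intervalIntegrable 0 s)
        intervalIntegrable_const, intervalIntegral.integral_const, smul_eq_mul]
    have h1 : (∫ u in (0:ℝ)..s, 2 * (γs ^ 2 * M u ^ q))
        = 2 * (γs ^ 2 * ∫ u in (0:ℝ)..s, M u ^ q) := by
      simp only [← mul_assoc]
      rw [intervalIntegral.integral_const_mul]
    rw [h1]
    ring
  -- key integral bound
  have hkey : γs ^ 2 * (∫ u in (0:ℝ)..s, M u ^ q) ≤ ‖R 0‖ ^ 2 / ((1 - ε ^ 2) * (s - r)) := by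
    have hε2 : 0 < 1 - ε ^ 2 := by nlinarith
    rcases eq_or_lt_of_le (norm_nonneg (R 0)) with hK | hK
    · -- ‖R 0‖ = 0
      have ha0 : a = 0 := by
        rw [hadef, ← hK]; exact Real.zero_rpow (by positivity)
      have hγ : γs = 0 := by rw [hγs, ha0, zero_div]
      rw [hγ, zero_pow two_ne_zero, zero_mul]
      positivity
    · -- ‖R 0‖ > 0
      have ha0 : 0 < a := Real.rpow_pos_of_pos hK _
      have hb : γs * (1 - ε) = a / (s - r) := by
        rw [hγs]; field_simp
      have hbpos : 0 < a / (s - r) := div_pos ha0 hc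
      -- split the integral at s - r
      have hMint : ∀ x y : ℝ, IntervalIntegrable (fun u => M u ^ q) volume x y :=
        fun x y => hMq_cont.intervalIntegrable x y
      have hsplit2 : (∫ u in (0:ℝ)..s, M u ^ q)
          = (∫ u in (0:ℝ)..(s - r), M u ^ q) + ∫ u in (s - r)..s, M u ^ q := by
        rw [intervalIntegral.integral_add_adjacent_intervals (hMint 0 (s-r)) (hMint (s-r) s)]
      have hsr_le : s - r ≤ s := by linarith
      have htail : (∫ u in (s - r)..s, M u ^ q) = 0 := by
        have : Set.EqOn (fun u => M u ^ q) (fun _ => (0:ℝ)) (Set.uIcc (s - r) s) := by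
          intro u hu
          rw [Set.uIcc_of_le hsr_le] at hu
          have h1 : a - γs * (1 - ε) * u ≤ 0 := by
            rw [hb]
            have : a / (s - r) * (s - r) ≤ a / (s - r) * u :=
              mul_le_mul_of_nonneg_left hu.1 hbpos.le
            rw [div_mul_cancel₀ _ hc.ne'] at this
            linarith
          simp only [hMdef]
          rw [max_eq_right h1]
          exact Real.zero_rpow hq.ne'
        rw [intervalIntegral.integral_congr this, intervalIntegral.integral_const, smul_zero]
      have hhead : (∫ u in (0:ℝ)..(s - r), M u ^ q)
          = (∫ u in (0:ℝ)..(s - r), (a - a / (s - r) * u) ^ q) := by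
        apply intervalIntegral.integral_congr
        intro u hu
        rw [Set.uIcc_of_le hc.le] at hu
        have h1 : 0 ≤ a - γs * (1 - ε) * u := by
          rw [hb]
          have : a / (s - r) * u ≤ a / (s - r) * (s - r) :=
            mul_le_mul_of_nonneg_left hu.2 hbpos.le
          rw [div_mul_cancel₀ _ hc.ne'] at this
          linarith
        simp only [hMdef]
        rw [max_eq_left h1, hb]
      have hcomp2 : (∫ u in (0:ℝ)..(s - r), (a - a / (s - r) * u) ^ q)
          = (a / (s - r))⁻¹ * ∫ x in (0:ℝ)..a, (a - x) ^ q := by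
        have := intervalIntegral.integral_comp_mul_left (fun x => (a - x) ^ q)
          (a := (0:ℝ)) (b := s - r) hbpos.ne'
        rw [this, mul_zero, div_mul_cancel₀ _ hc.ne', smul_eq_mul]
      have hsub : (∫ x in (0:ℝ)..a, (a - x) ^ q) = ∫ x in (0:ℝ)..a, x ^ q := by
        have := intervalIntegral.integral_comp_sub_left (fun x => x ^ q) a
          (a := (0:ℝ)) (b := a)
        rw [this, sub_self, sub_zero]
      have hrpow : (∫ x in (0:ℝ)..a, x ^ q) = a ^ (q + 1) / (q + 1) := by
        rw [integral_rpow (Or.inl (by linarith))]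
        rw [Real.zero_rpow (by positivity : q + 1 ≠ 0), sub_zero]
      have hJ : (∫ u in (0:ℝ)..s, M u ^ q) = (s - r) / a * (a ^ (q + 1) / (q + 1)) := by
        rw [hsplit2, htail, add_zero, hhead, hcomp2, hsub, hrpow, inv_div]
      rw [hJ]
      -- now pure rpow algebra
      have hq1 : q + 1 = (1 + ε) / (1 - ε) := by
        rw [hqdef]; field_simp; ring
      have hkey2 : a * a ^ (q + 1) = ‖R 0‖ ^ 2 := by
        have e1 : a * a ^ (q + 1) = a ^ (1 + (q + 1)) := by
          rw [Real.rpow_add ha0 1 (q + 1), Real.rpow_one]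
        have e2 : (1:ℝ) + (q + 1) = 2 / (1 - ε) := by
          rw [hqdef]; field_simp; ring
        have e3 : a ^ ((2:ℝ) / (1 - ε)) = ‖R 0‖ ^ (2:ℝ) := by
          rw [hadef, ← Real.rpow_mul (norm_nonneg _)]
          congr 1
          field_simp
        rw [e1, e2, e3, show ((2:ℝ)) = ((2:ℕ):ℝ) by norm_num, Real.rpow_natCast]
      have h1ε : (1:ℝ) + ε ≠ 0 := by positivity
      rw [hγs, ← hkey2]
      apply le_of_eq
      set B := a ^ (q + 1) with hB
      rw [hq1]
      field_simp
      ring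
  have hNN := hNnn 0
  calc (1/2) * ∫ u in (0:ℝ)..T, ‖ζ u‖ ^ 2
      = (1/2) * ∫ u in (0:ℝ)..s, ‖ζ u‖ ^ 2 := by rw [hsplit]
    _ ≤ (1/2) * (2 * (γs ^ 2 * ∫ u in (0:ℝ)..s, M u ^ q) + 2 * (L ^ 2 * N 0 ^ 2) * s) := by
        rw [← hrhs]; linarith [hcomp]
    _ = γs ^ 2 * (∫ u in (0:ℝ)..s, M u ^ q) + L ^ 2 * s * N 0 ^ 2 := by ring
    _ ≤ ‖R 0‖ ^ 2 / ((1 - ε ^ 2) * (s - r)) + L ^ 2 * s * N 0 ^ 2 := by linarith [hkey]
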